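/- Let n ∈ ℕ and t be a Boolean term all of whose variables are among X 1, …, X n. Then there exists an n-standard DNF term u such that t and u are f-equivalent. -/

import Mathlib

/-- Boolean terms (formulas). -/
inductive BT where
  | X : ℕ → BT
  | zero : BT
  | one : BT
  | or : BT → BT → BT
  | and : BT → BT → BT
  | not : BT → BT

namespace BT

/-- The evaluation map `Φ_A` of a Boolean term in a Boolean algebra `A`
under an assignment `v : ℕ → A` of the variables. -/
def eval {A : Type*} [BooleanAlgebra A] (v : ℕ → A) : BT → A
  | X i => v i
  | zero => ⊥
  | one => ⊤
  | or t u => eval v t ⊔ eval v u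
  | and t u => eval v t ⊓ eval v u
  | not t => (eval v t)ᶜ

/-- One-step Boolean transformation: the nineteen rules BT1–BT19, closed
under the term-forming operations (compatible closure). -/
inductive Step : BT → BT → Prop where
  | bt1 (u : BT) : Step (and zero u) zero
  | bt2 (u : BT) : Step (or zero u) u
  | bt3 (u : BT) : Step (and one u) u
  | bt4 (u : BT) : Step (or one u) one
  | bt5 (u : BT) : Step (and u (not u)) zero
  | bt6 (u : BT) : Step (or u (not u)) one
  | bt7 (u u' : BT) : Step (or u u') (or u' u)
  | bt8 (u u' : BT) : Step (and u u') (and u' u)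
  | bt9 (u u' u'' : BT) : Step (or u (or u' u'')) (or (or u u') u'')
  | bt10 (u u' u'' : BT) : Step (and u (and u' u'')) (and (and u u') u'')
  | bt11 (u : BT) : Step (or u u) u
  | bt12 (u : BT) : Step (and u u) u
  | bt13 (u u' u'' : BT) : Step (or u (and u' u'')) (and (or u u') (or u u''))
  | bt14 (u u' u'' : BT) : Step (and u (or u' u'')) (or (and u u') (and u u''))
  | bt15 (u u' : BT) : Step (or u (and u u')) u
  | bt16 (u u' : BT) : Step (and u (or u u')) u
  | bt17 (u : BT) : Step (not (not u)) u
  | bt18 (u u' : BT) : Step (not (or u u')) (and (not u) (not u'))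
  | bt19 (u u' : BT) : Step (not (and u u')) (or (not u) (not u'))
  | orLeft {t t' : BT} (u : BT) : Step t t' → Step (or t u) (or t' u)
  | orRight (u : BT) {t t' : BT} : Step t t' → Step (or u t) (or u t')
  | andLeft {t t' : BT} (u : BT) : Step t t' → Step (and t u) (and t' u)
  | andRight (u : BT) {t t' : BT} : Step t t' → Step (and u t) (and u t')
  | notCong {t t' : BT} : Step t t' → Step (not t) (not t')

/-- f-equivalence of Boolean terms: the equivalence closure of `Step`. -/
def FEq (t u : BT) : Prop := Relation.EqvGen Step t u

end BT

namespace BT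

/-- The literal of index `i` of type `τ i`: `X i` if `τ i = false`,
`¬ X i` if `τ i = true`. -/
def lit (τ : ℕ → Bool) (i : ℕ) : BT := if τ i then not (X i) else X i

/-- `IsMeetOfLits τ S t`: `t` is an iterated meet, in some order and
bracketing, of the literals `lit τ i` for `i ∈ S`, each used exactly once
(`S` nonempty). -/
inductive IsMeetOfLits (τ : ℕ → Bool) : Finset ℕ → BT → Prop where
  | single (i : ℕ) : IsMeetOfLits τ {i} (lit τ i)
  | and {S S' : Finset ℕ} {t t' : BT} (h : Disjoint S S') :
      IsMeetOfLits τ S t → IsMeetOfLits τ S' t' →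
      IsMeetOfLits τ (S ∪ S') (and t t')

/-- An `S`-monomial_∧ of type `τ`: an iterated meet of the literals of the
variables indexed by `S`, one per element of `S`; for `S = ∅` it is the
term `1`. (Only the values of `τ` on `S` are relevant.) -/
def IsMonA (S : Finset ℕ) (τ : ℕ → Bool) (t : BT) : Prop :=
  (S = ∅ ∧ t = one) ∨ IsMeetOfLits τ S t

/-- Nonempty iterated joins of the terms in a multiset. -/
inductive IsJoinOfPos : Multiset BT → BT → Prop where
  | single (t : BT) : IsJoinOfPos {t} t
  | or {l l' : Multiset BT} {s s' : BT} :
      IsJoinOfPos l s → IsJoinOfPos l' s' → IsJoinOfPos (l + l') (or s s')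

/-- `s` is an iterated join (in some order and bracketing) of the terms in
the multiset `l`; the empty join is the term `0`. -/
def IsJoinOf (l : Multiset BT) (s : BT) : Prop :=
  (l = 0 ∧ s = zero) ∨ IsJoinOfPos l s

end BT

namespace BT

/-- The finite set of indices of variables occurring in a Boolean term. -/
def vars : BT → Finset ℕ
  | X i => {i}
  | zero => ∅
  | one => ∅
  | or t u => vars t ∪ vars u
  | and t u => vars t ∪ vars u
  | not t => vars t

/-- An `n`-standard DNF term: an iterated join of finitely many
`{1,…,n}`-monomials_∧ with pairwise distinct types. -/
def IsDNF (n : ℕ) (t : BT) : Prop :=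
  ∃ (k : ℕ) (τ : Fin k → ℕ → Bool) (μ : Fin k → BT),
    (∀ i, IsMonA (Finset.Icc 1 n) (τ i) (μ i)) ∧
    (∀ i j : Fin k, i ≠ j → ∃ l ∈ Finset.Icc 1 n, τ i l ≠ τ j l) ∧
    IsJoinOf (Multiset.map μ Finset.univ.val) t

end BT
deriving instance DecidableEq for BT

namespace BT

/-! ### Basic FEq API -/

theorem feq_refl (t : BT) : FEq t t := Relation.EqvGen.refl t
theorem FEq.symm' {t u : BT} (h : FEq t u) : FEq u t := Relation.EqvGen.symm _ _ h
theorem FEq.trans' {t u v : BT} (h : FEq t u) (h' : FEq u v) : FEq t v :=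
  Relation.EqvGen.trans _ _ _ h h'
theorem Step.feq {t u : BT} (h : Step t u) : FEq t u := Relation.EqvGen.rel _ _ h

scoped infix:50 " =f " => FEq

instance : Trans FEq FEq FEq := ⟨FEq.trans'⟩

theorem feq_or_left {a b : BT} (c : BT) (h : FEq a b) : FEq (or a c) (or b c) := by
  induction h with
  | rel _ _ h => exact (Step.orLeft _ h).feq
  | refl => exact feq_refl _
  | symm _ _ _ ih => exact ih.symm'
  | trans _ _ _ _ _ ih1 ih2 => exact ih1.trans' ih2

theorem feq_or_right (c : BT) {a b : BT} (h : FEq a b) : FEq (or c a) (or c b) := by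
  induction h with
  | rel _ _ h => exact (Step.orRight _ h).feq
  | refl => exact feq_refl _
  | symm _ _ _ ih => exact ih.symm'
  | trans _ _ _ _ _ ih1 ih2 => exact ih1.trans' ih2

theorem feq_and_left {a b : BT} (c : BT) (h : FEq a b) : FEq (and a c) (and b c) := by
  induction h with
  | rel _ _ h => exact (Step.andLeft _ h).feq
  | refl => exact feq_refl _
  | symm _ _ _ ih => exact ih.symm'
  | trans _ _ _ _ _ ih1 ih2 => exact ih1.trans' ih2

theorem feq_and_right (c : BT) {a b : BT} (h : FEq a b) : FEq (and c a) (and c b) := by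
  induction h with
  | rel _ _ h => exact (Step.andRight _ h).feq
  | refl => exact feq_refl _
  | symm _ _ _ ih => exact ih.symm'
  | trans _ _ _ _ _ ih1 ih2 => exact ih1.trans' ih2

theorem feq_or {a b c d : BT} (h1 : FEq a b) (h2 : FEq c d) : FEq (or a c) (or b d) :=
  (feq_or_left c h1).trans' (feq_or_right b h2)

theorem feq_and {a b c d : BT} (h1 : FEq a b) (h2 : FEq c d) : FEq (and a c) (and b d) :=
  (feq_and_left c h1).trans' (feq_and_right b h2)

theorem feq_not {a b : BT} (h : FEq a b) : FEq (not a) (not b) := by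
  induction h with
  | rel _ _ h => exact (Step.notCong h).feq
  | refl => exact feq_refl _
  | symm _ _ _ ih => exact ih.symm'
  | trans _ _ _ _ _ ih1 ih2 => exact ih1.trans' ih2

theorem feq_or_comm (a b : BT) : FEq (or a b) (or b a) := (Step.bt7 a b).feq
theorem feq_and_comm (a b : BT) : FEq (and a b) (and b a) := (Step.bt8 a b).feq
theorem feq_or_assoc (a b c : BT) : FEq (or a (or b c)) (or (or a b) c) := (Step.bt9 a b c).feq
theorem feq_and_assoc (a b c : BT) : FEq (and a (and b c)) (and (and a b) c) :=
  (Step.bt10 a b c).feq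
theorem feq_or_zero (a : BT) : FEq (or a zero) a :=
  (feq_or_comm a zero).trans' (Step.bt2 a).feq
theorem feq_and_one (a : BT) : FEq (and a one) a :=
  (feq_and_comm a one).trans' (Step.bt3 a).feq

/-! ### Generic iterated joins and meets of lists of terms -/

/-- Iterated join of a list of terms (right-bracketed), empty list gives `zero`. -/
def joinL : List BT → BT
  | [] => zero
  | [a] => a
  | a :: b :: l => or a (joinL (b :: l))

/-- Iterated meet of a list of terms (right-bracketed), empty list gives `one`. -/
def meetL : List BT → BT
  | [] => one
  | [a] => a
  | a :: b :: l => and a (meetL (b :: l))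

theorem joinL_cons_feq (a : BT) (l : List BT) : FEq (or a (joinL l)) (joinL (a :: l)) := by
  match l with
  | [] => exact feq_or_zero a
  | b :: l => exact feq_refl _

theorem meetL_cons_feq (a : BT) (l : List BT) : FEq (and a (meetL l)) (meetL (a :: l)) := by
  match l with
  | [] => exact feq_and_one a
  | b :: l => exact feq_refl _

theorem joinL_append (l l' : List BT) : FEq (or (joinL l) (joinL l')) (joinL (l ++ l')) := by
  induction l with
  | nil => exact (Step.bt2 _).feq
  | cons a l ih =>
      calc (or (joinL (a :: l)) (joinL l')) =f (or (or a (joinL l)) (joinL l')) :=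
            feq_or_left _ (joinL_cons_feq a l).symm'
        _ =f (or a (or (joinL l) (joinL l'))) := (feq_or_assoc _ _ _).symm'
        _ =f (or a (joinL (l ++ l'))) := feq_or_right _ ih
        _ =f (joinL (a :: (l ++ l'))) := joinL_cons_feq _ _

theorem meetL_append (l l' : List BT) : FEq (and (meetL l) (meetL l')) (meetL (l ++ l')) := by
  induction l with
  | nil => exact (Step.bt3 _).feq
  | cons a l ih =>
      calc (and (meetL (a :: l)) (meetL l')) =f (and (and a (meetL l)) (meetL l')) :=
            feq_and_left _ (meetL_cons_feq a l).symm'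
        _ =f (and a (and (meetL l) (meetL l'))) := (feq_and_assoc _ _ _).symm'
        _ =f (and a (meetL (l ++ l'))) := feq_and_right _ ih
        _ =f (meetL (a :: (l ++ l'))) := meetL_cons_feq _ _

theorem joinL_perm {l l' : List BT} (h : l.Perm l') : FEq (joinL l) (joinL l') := by
  induction h with
  | nil => exact feq_refl _
  | cons a _ ih =>
      exact ((joinL_cons_feq _ _).symm'.trans' (feq_or_right _ ih)).trans' (joinL_cons_feq _ _)
  | swap a b l =>
      calc (joinL (b :: a :: l)) =f (or b (joinL (a :: l))) := (joinL_cons_feq _ _).symm'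
        _ =f (or b (or a (joinL l))) := feq_or_right _ (joinL_cons_feq _ _).symm'
        _ =f (or (or b a) (joinL l)) := feq_or_assoc _ _ _
        _ =f (or (or a b) (joinL l)) := feq_or_left _ (feq_or_comm _ _)
        _ =f (or a (or b (joinL l))) := (feq_or_assoc _ _ _).symm'
        _ =f (or a (joinL (b :: l))) := feq_or_right _ (joinL_cons_feq _ _)
        _ =f (joinL (a :: b :: l)) := joinL_cons_feq _ _
  | trans _ _ ih1 ih2 => exact ih1.trans' ih2

theorem meetL_perm {l l' : List BT} (h : l.Perm l') : FEq (meetL l) (meetL l') := by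
  induction h with
  | nil => exact feq_refl _
  | cons a _ ih =>
      exact ((meetL_cons_feq _ _).symm'.trans' (feq_and_right _ ih)).trans' (meetL_cons_feq _ _)
  | swap a b l =>
      calc (meetL (b :: a :: l)) =f (and b (meetL (a :: l))) := (meetL_cons_feq _ _).symm'
        _ =f (and b (and a (meetL l))) := feq_and_right _ (meetL_cons_feq _ _).symm'
        _ =f (and (and b a) (meetL l)) := feq_and_assoc _ _ _
        _ =f (and (and a b) (meetL l)) := feq_and_left _ (feq_and_comm _ _)
        _ =f (and a (and b (meetL l))) := (feq_and_assoc _ _ _).symm'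
        _ =f (and a (meetL (b :: l))) := feq_and_right _ (meetL_cons_feq _ _)
        _ =f (meetL (a :: b :: l)) := meetL_cons_feq _ _
  | trans _ _ ih1 ih2 => exact ih1.trans' ih2

end BT
namespace BT

/-! ### More joinL lemmas -/

theorem joinL_cons_mem {a : BT} {l : List BT} (h : a ∈ l) :
    FEq (joinL (a :: l)) (joinL l) := by
  have hperm : l.Perm (a :: l.erase a) := List.perm_cons_erase h
  have h2 : FEq (joinL (a :: a :: l.erase a)) (joinL (a :: l.erase a)) :=
    calc (joinL (a :: a :: l.erase a)) =f (or a (joinL (a :: l.erase a))) :=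
          (joinL_cons_feq _ _).symm'
      _ =f (or a (or a (joinL (l.erase a)))) := feq_or_right _ (joinL_cons_feq _ _).symm'
      _ =f (or (or a a) (joinL (l.erase a))) := feq_or_assoc _ _ _
      _ =f (or a (joinL (l.erase a))) := feq_or_left _ (Step.bt11 a).feq
      _ =f (joinL (a :: l.erase a)) := joinL_cons_feq _ _
  exact ((joinL_perm (hperm.cons a)).trans' h2).trans' (joinL_perm hperm.symm)

theorem joinL_append_subset {l : List BT} : ∀ {l' : List BT}, (∀ x ∈ l', x ∈ l) →
    FEq (joinL (l ++ l')) (joinL l)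
  | [], _ => by rw [List.append_nil]; exact feq_refl _
  | a :: l', h => by
      have h1 : (l ++ a :: l').Perm (a :: (l ++ l')) := List.perm_middle
      have h2 : a ∈ l ++ l' := List.mem_append_left _ (h a List.mem_cons_self)
      exact ((joinL_perm h1).trans' (joinL_cons_mem h2)).trans'
        (joinL_append_subset fun x hx => h x (List.mem_cons_of_mem _ hx))

theorem joinL_map_congr {α : Type} {f g : α → BT} : ∀ {l : List α},
    (∀ x ∈ l, FEq (f x) (g x)) → FEq (joinL (l.map f)) (joinL (l.map g))
  | [], _ => feq_refl _
  | a :: l, h => by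
      have ih := joinL_map_congr (fun x hx => h x (List.mem_cons_of_mem _ hx))
      calc (joinL ((a :: l).map f)) =f (or (f a) (joinL (l.map f))) :=
            (joinL_cons_feq _ _).symm'
        _ =f (or (g a) (joinL (l.map g))) := feq_or (h a List.mem_cons_self) ih
        _ =f (joinL ((a :: l).map g)) := joinL_cons_feq _ _

theorem joinL_map_if {α : Type} {p : α → Bool} {g f : α → BT} : ∀ {l : List α},
    (∀ x ∈ l, FEq (g x) (if p x then f x else zero)) →
    FEq (joinL (l.map g)) (joinL ((l.filter p).map f))
  | [], _ => feq_refl _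
  | a :: l, h => by
      have ih := joinL_map_if (fun x hx => h x (List.mem_cons_of_mem _ hx))
      have ha := h a List.mem_cons_self
      by_cases hp : p a
      · rw [if_pos hp] at ha
        rw [List.filter_cons_of_pos hp]
        calc (joinL ((a :: l).map g)) =f (or (g a) (joinL (l.map g))) :=
              (joinL_cons_feq _ _).symm'
          _ =f (or (f a) (joinL ((l.filter p).map f))) := feq_or ha ih
          _ =f (joinL (f a :: (l.filter p).map f)) := joinL_cons_feq _ _
      · rw [if_neg hp] at ha
        rw [List.filter_cons_of_neg (by simpa using hp)]
        calc (joinL ((a :: l).map g)) =f (or (g a) (joinL (l.map g))) :=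
              (joinL_cons_feq _ _).symm'
          _ =f (or zero (joinL (l.map g))) := feq_or_left _ ha
          _ =f (joinL (l.map g)) := (Step.bt2 _).feq
          _ =f (joinL ((l.filter p).map f)) := ih

theorem and_joinL (a : BT) : ∀ (l : List BT),
    FEq (and a (joinL l)) (joinL (l.map (and a)))
  | [] => (feq_and_comm a zero).trans' (Step.bt1 a).feq
  | b :: l =>
      calc (and a (joinL (b :: l))) =f (and a (or b (joinL l))) :=
            feq_and_right _ (joinL_cons_feq _ _).symm'
        _ =f (or (and a b) (and a (joinL l))) := (Step.bt14 _ _ _).feq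
        _ =f (or (and a b) (joinL (l.map (and a)))) := feq_or_right _ (and_joinL a l)
        _ =f (joinL (and a b :: l.map (and a))) := joinL_cons_feq _ _

/-! ### Monomials and DNF terms -/

/-- The literal of `i` determined by a set `S`: negated iff `i ∈ S`. -/
def litS (S : Finset ℕ) : ℕ → BT := lit (fun j => decide (j ∈ S))

/-- The full monomial over variable set `V` with negation pattern `S`. -/
noncomputable def mon (V S : Finset ℕ) : BT := meetL (V.toList.map (litS S))

/-- The DNF term over variable set `V` with set of monomial patterns `F`. -/
noncomputable def dnfT (V : Finset ℕ) (F : Finset (Finset ℕ)) : BT := joinL (F.toList.map (mon V))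

theorem litS_pos {S : Finset ℕ} {i : ℕ} (h : i ∈ S) : litS S i = not (X i) := by
  simp [litS, lit, h]

theorem litS_neg {S : Finset ℕ} {i : ℕ} (h : i ∉ S) : litS S i = X i := by
  simp [litS, lit, h]

theorem mon_extract {V S : Finset ℕ} {i : ℕ} (hi : i ∈ V) :
    FEq (mon V S) (and (litS S i) (meetL ((V.erase i).toList.map (litS S)))) := by
  have hperm : V.toList.Perm (i :: (V.erase i).toList) := by
    rw [← Multiset.coe_eq_coe, ← Multiset.cons_coe, Finset.coe_toList, Finset.coe_toList,
      Finset.erase_val]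
    exact (Multiset.cons_erase (by simpa using hi)).symm
  exact (meetL_perm (hperm.map (litS S))).trans' (meetL_cons_feq _ _).symm'

theorem and_X_mon {V S : Finset ℕ} {i : ℕ} (hi : i ∈ V) :
    FEq (and (X i) (mon V S)) (if i ∉ S then mon V S else zero) := by
  set R := meetL ((V.erase i).toList.map (litS S)) with hR
  have hex := mon_extract (S := S) hi
  by_cases hS : i ∈ S
  · rw [litS_pos hS] at hex
    rw [if_neg (by simpa using hS)]
    calc (and (X i) (mon V S)) =f (and (X i) (and (not (X i)) R)) := feq_and_right _ hex
      _ =f (and (and (X i) (not (X i))) R) := feq_and_assoc _ _ _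
      _ =f (and zero R) := feq_and_left _ (Step.bt5 _).feq
      _ =f zero := (Step.bt1 _).feq
  · rw [litS_neg hS] at hex
    rw [if_pos hS]
    calc (and (X i) (mon V S)) =f (and (X i) (and (X i) R)) := feq_and_right _ hex
      _ =f (and (and (X i) (X i)) R) := feq_and_assoc _ _ _
      _ =f (and (X i) R) := feq_and_left _ (Step.bt12 _).feq
      _ =f (mon V S) := hex.symm'

theorem mon_and_mon_ne {V S S' : Finset ℕ} (hS : S ⊆ V) (hS' : S' ⊆ V) (hne : S ≠ S') :
    FEq (and (mon V S) (mon V S')) zero := by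
  -- find an index where S and S' differ
  obtain ⟨i, hiV, hdiff⟩ : ∃ i ∈ V, ¬(i ∈ S ↔ i ∈ S') := by
    by_contra hcon
    push_neg at hcon
    exact hne (Finset.ext fun i => by
      by_cases hiv : i ∈ V
      · exact hcon i hiv
      · constructor <;> intro h <;> [exact absurd (hS h) hiv; exact absurd (hS' h) hiv])
  set a := litS S i with ha
  set b := litS S' i with hb
  have hab : FEq (and a b) zero := by
    by_cases hS1 : i ∈ S
    · have hS2 : i ∉ S' := fun h => hdiff ⟨fun _ => h, fun _ => hS1⟩
      rw [ha, hb, litS_pos hS1, litS_neg hS2]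
      exact (feq_and_comm _ _).trans' (Step.bt5 _).feq
    · have hS2 : i ∈ S' := by
        by_contra hS2
        exact hdiff ⟨fun h => absurd h hS1, fun h => absurd h hS2⟩
      rw [ha, hb, litS_neg hS1, litS_pos hS2]
      exact (Step.bt5 _).feq
  set L1 := V.toList.map (litS S) with hL1
  set L2 := V.toList.map (litS S') with hL2
  have hmem1 : a ∈ L1 := List.mem_map_of_mem (Finset.mem_toList.2 hiV)
  have hmem2 : b ∈ L2 := List.mem_map_of_mem (Finset.mem_toList.2 hiV)
  have hperm : (L1 ++ L2).Perm (a :: b :: (L1.erase a ++ L2.erase b)) :=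
    ((List.perm_cons_erase hmem1).append (List.perm_cons_erase hmem2)).trans
      (List.perm_middle.cons a)
  set r := L1.erase a ++ L2.erase b with hr
  calc (and (mon V S) (mon V S')) =f (meetL (L1 ++ L2)) := meetL_append _ _
    _ =f (meetL (a :: b :: r)) := meetL_perm hperm
    _ =f (and a (meetL (b :: r))) := (meetL_cons_feq _ _).symm'
    _ =f (and a (and b (meetL r))) := feq_and_right _ (meetL_cons_feq _ _).symm'
    _ =f (and (and a b) (meetL r)) := feq_and_assoc _ _ _
    _ =f (and zero (meetL r)) := feq_and_left _ hab
    _ =f zero := (Step.bt1 _).feq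

end BT
namespace BT

/-! ### The three operations on DNF terms -/

theorem toList_perm_of_val_eq {α : Type} {s : Finset α} {l : List α} (h : s.val = ↑l) :
    s.toList.Perm l := by
  rw [← Multiset.coe_eq_coe, Finset.coe_toList, h]

theorem dnfT_or (V : Finset ℕ) (F F' : Finset (Finset ℕ)) :
    FEq (or (dnfT V F) (dnfT V F')) (dnfT V (F ∪ F')) := by
  have h1 : FEq (or (dnfT V F) (dnfT V F')) (joinL ((F.toList ++ F'.toList).map (mon V))) := by
    rw [List.map_append]; exact joinL_append _ _
  have hperm : (F.toList ++ F'.toList).Perm ((F ∪ F').toList ++ (F ∩ F').toList) := by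
    rw [← Multiset.coe_eq_coe, ← Multiset.coe_add, ← Multiset.coe_add]
    simp only [Finset.coe_toList]
    rw [Finset.union_val, Finset.inter_val]
    exact (Multiset.union_add_inter _ _).symm
  have h2 : ∀ x ∈ (F ∩ F').toList.map (mon V), x ∈ (F ∪ F').toList.map (mon V) := by
    intro x hx
    obtain ⟨S, hS, rfl⟩ := List.mem_map.1 hx
    exact List.mem_map_of_mem (Finset.mem_toList.2
      (Finset.mem_union_left _ (Finset.mem_of_mem_inter_left (Finset.mem_toList.1 hS))))
  calc (or (dnfT V F) (dnfT V F')) =f (joinL ((F.toList ++ F'.toList).map (mon V))) := h1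
    _ =f (joinL (((F ∪ F').toList ++ (F ∩ F').toList).map (mon V))) :=
        joinL_perm (hperm.map _)
    _ =f (dnfT V (F ∪ F')) := by
        rw [List.map_append]; exact joinL_append_subset h2

theorem mon_and_dnfT {V S : Finset ℕ} (hS : S ⊆ V) {F' : Finset (Finset ℕ)}
    (hF' : ∀ T ∈ F', T ⊆ V) :
    FEq (and (mon V S) (dnfT V F')) (if S ∈ F' then mon V S else zero) := by
  have h1 : FEq (and (mon V S) (dnfT V F'))
      (joinL (F'.toList.map (fun T => and (mon V S) (mon V T)))) := by
    have := and_joinL (mon V S) (F'.toList.map (mon V))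
    rwa [List.map_map] at this
  have h2 : FEq (joinL (F'.toList.map (fun T => and (mon V S) (mon V T))))
      (joinL ((F'.toList.filter (fun T => T = S)).map (mon V))) := by
    apply joinL_map_if
    intro T hT
    by_cases hTS : T = S
    · subst hTS
      rw [if_pos (by simp)]
      exact (Step.bt12 _).feq
    · rw [if_neg (by simpa using hTS)]
      exact mon_and_mon_ne hS (hF' T (Finset.mem_toList.1 hT)) (Ne.symm hTS)
  have h3 : (F'.toList.filter (fun T => T = S)).Perm (if S ∈ F' then [S] else []) := by
    rw [← Multiset.coe_eq_coe, ← Multiset.filter_coe (fun T => T = S), Finset.coe_toList,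
      ← Finset.filter_val, Finset.filter_eq']
    by_cases hSF : S ∈ F' <;> simp [hSF]
  refine (h1.trans' h2).trans' ?_
  refine (joinL_perm (h3.map _)).trans' ?_
  by_cases hSF : S ∈ F' <;> simp only [hSF, if_true, if_false] <;> exact feq_refl _

theorem dnfT_and {V : Finset ℕ} {F F' : Finset (Finset ℕ)} (hF : ∀ S ∈ F, S ⊆ V)
    (hF' : ∀ T ∈ F', T ⊆ V) :
    FEq (and (dnfT V F) (dnfT V F')) (dnfT V (F ∩ F')) := by
  have h1 : FEq (and (dnfT V F) (dnfT V F'))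
      (joinL (F.toList.map (fun S => and (mon V S) (dnfT V F')))) := by
    have h0 : FEq (and (dnfT V F) (dnfT V F'))
        (and (dnfT V F') (dnfT V F)) := feq_and_comm _ _
    have := and_joinL (dnfT V F') (F.toList.map (mon V))
    rw [List.map_map] at this
    refine (h0.trans' this).trans' (joinL_map_congr ?_)
    intro S _
    exact feq_and_comm _ _
  have h2 : FEq (joinL (F.toList.map (fun S => and (mon V S) (dnfT V F'))))
      (joinL ((F.toList.filter (fun S => S ∈ F')).map (mon V))) := by
    apply joinL_map_if
    intro S hS
    have := mon_and_dnfT (hF S (Finset.mem_toList.1 hS)) hF'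
    by_cases hSF : S ∈ F' <;> simp [hSF] at this ⊢ <;> exact this
  have h3 : (F.toList.filter (fun S => S ∈ F')).Perm ((F ∩ F').toList) := by
    rw [← Multiset.coe_eq_coe, ← Multiset.filter_coe (fun S => S ∈ F'), Finset.coe_toList,
      Finset.coe_toList, ← Finset.filter_val, Finset.filter_mem_eq_inter]
  exact (h1.trans' h2).trans' (joinL_perm (h3.map _))

end BT
namespace BT

/-! ### The join of all full monomials is one -/

theorem mon_insert_notMem {V' T : Finset ℕ} {i : ℕ} (hi : i ∉ V') (hT : T ⊆ V') :
    FEq (mon (insert i V') T) (and (X i) (mon V' T)) := by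
  have hiT : i ∉ T := fun h => hi (hT h)
  have hex := mon_extract (S := T) (Finset.mem_insert_self i V')
  rw [Finset.erase_insert hi, litS_neg hiT] at hex
  exact hex

theorem mon_insert_mem {V' T : Finset ℕ} {i : ℕ} (hi : i ∉ V') (hT : T ⊆ V') :
    FEq (mon (insert i V') (insert i T)) (and (not (X i)) (mon V' T)) := by
  have hex := mon_extract (S := insert i T) (Finset.mem_insert_self i V')
  rw [Finset.erase_insert hi, litS_pos (Finset.mem_insert_self i T)] at hex
  have hmap : V'.toList.map (litS (insert i T)) = V'.toList.map (litS T) := by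
    apply List.map_congr_left
    intro j hj
    have hji : j ≠ i := fun h => hi (h ▸ Finset.mem_toList.1 hj)
    have : (j ∈ insert i T) = (j ∈ T) := by simp [Finset.mem_insert, hji]
    simp [litS, lit, this]
  rw [hmap] at hex
  exact hex

theorem dnfT_powerset (V : Finset ℕ) : FEq (dnfT V V.powerset) one := by
  induction V using Finset.induction with
  | empty =>
      have h : dnfT ∅ (Finset.powerset ∅) = one := by
        simp only [Finset.powerset_empty, dnfT]
        rw [Finset.toList_singleton]
        show mon ∅ ∅ = one
        simp only [mon, Finset.toList_empty, List.map_nil]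
        rfl
      rw [h]; exact feq_refl _
  | @insert i V' hi ih =>
      set A := V'.powerset with hA
      set B := A.image (insert i) with hB
      have hdisj : Disjoint A B := by
        rw [Finset.disjoint_left]
        intro S hSA hSB
        obtain ⟨T, hT, rfl⟩ := Finset.mem_image.1 hSB
        exact hi (Finset.mem_powerset.1 hSA (Finset.mem_insert_self i T))
      have hpw : (insert i V').powerset = A ∪ B := Finset.powerset_insert V' i
      have hBval : B.val = A.val.map (insert i) := by
        apply Finset.image_val_of_injOn
        intro T hT T' hT' h
        simp only [Finset.mem_coe, hA, Finset.mem_powerset] at hT hT'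
        have hiT : i ∉ T := fun hh => hi (hT hh)
        have hiT' : i ∉ T' := fun hh => hi (hT' hh)
        rw [← Finset.erase_insert hiT, ← Finset.erase_insert hiT', h]
      have hperm : ((insert i V').powerset).toList.Perm
          (A.toList ++ A.toList.map (insert i)) := by
        rw [← Multiset.coe_eq_coe, ← Multiset.coe_add]
        simp only [Finset.coe_toList]
        rw [hpw, ← Finset.disjUnion_eq_union _ _ hdisj]
        show A.val + B.val = _
        rw [hBval]
        congr 1
        rw [← Multiset.map_coe, Finset.coe_toList]
      have j1 : FEq (joinL (A.toList.map (mon (insert i V')))) (X i) := by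
        have hc : FEq (joinL (A.toList.map (mon (insert i V'))))
            (joinL (A.toList.map (fun T => and (X i) (mon V' T)))) := by
          apply joinL_map_congr
          intro T hT
          exact mon_insert_notMem hi (Finset.mem_powerset.1 (Finset.mem_toList.1 hT))
        have hd := and_joinL (X i) (A.toList.map (mon V'))
        rw [List.map_map] at hd
        exact ((hc.trans' hd.symm').trans' (feq_and_right _ ih)).trans' (feq_and_one _)
      have j2 : FEq (joinL ((A.toList.map (insert i)).map (mon (insert i V')))) (not (X i)) := by
        rw [List.map_map]
        have hc : FEq (joinL (A.toList.map (mon (insert i V') ∘ insert i)))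
            (joinL (A.toList.map (fun T => and (not (X i)) (mon V' T)))) := by
          apply joinL_map_congr
          intro T hT
          exact mon_insert_mem hi (Finset.mem_powerset.1 (Finset.mem_toList.1 hT))
        have hd := and_joinL (not (X i)) (A.toList.map (mon V'))
        rw [List.map_map] at hd
        exact ((hc.trans' hd.symm').trans' (feq_and_right _ ih)).trans' (feq_and_one _)
      calc (dnfT (insert i V') (insert i V').powerset)
          =f (joinL ((A.toList ++ A.toList.map (insert i)).map (mon (insert i V')))) :=
            joinL_perm (hperm.map _)
        _ =f (or (joinL (A.toList.map (mon (insert i V'))))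
              (joinL ((A.toList.map (insert i)).map (mon (insert i V'))))) := by
            rw [List.map_append]; exact (joinL_append _ _).symm'
        _ =f (or (X i) (not (X i))) := feq_or j1 j2
        _ =f one := (Step.bt6 _).feq

/-! ### Variables, complement -/

theorem X_feq_dnfT {V : Finset ℕ} {i : ℕ} (hi : i ∈ V) :
    FEq (X i) (dnfT V (V.powerset.filter (fun S => i ∉ S))) := by
  have h1 : FEq (X i) (and (X i) (dnfT V V.powerset)) :=
    (feq_and_one (X i)).symm'.trans' (feq_and_right _ (dnfT_powerset V).symm')
  have h2 : FEq (and (X i) (dnfT V V.powerset))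
      (joinL (V.powerset.toList.map (fun S => and (X i) (mon V S)))) := by
    have := and_joinL (X i) (V.powerset.toList.map (mon V))
    rwa [List.map_map] at this
  have h3 : FEq (joinL (V.powerset.toList.map (fun S => and (X i) (mon V S))))
      (joinL ((V.powerset.toList.filter (fun S => i ∉ S)).map (mon V))) := by
    apply joinL_map_if
    intro S hS
    have := and_X_mon (S := S) hi
    by_cases hiS : i ∈ S <;> simp [hiS] at this ⊢ <;> exact this
  have h4 : (V.powerset.toList.filter (fun S => i ∉ S)).Perm
      ((V.powerset.filter (fun S => i ∉ S)).toList) := by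
    rw [← Multiset.coe_eq_coe, ← Multiset.filter_coe (fun S => i ∉ S), Finset.coe_toList,
      Finset.coe_toList, ← Finset.filter_val]
  exact ((h1.trans' h2).trans' h3).trans' (joinL_perm (h4.map _))

theorem feq_not_of {a b : BT} (h1 : FEq (or a b) one) (h2 : FEq (and a b) zero) :
    FEq (not a) b := by
  have key1 : FEq (not a) (and b (not a)) :=
    calc (not a) =f (and one (not a)) := (Step.bt3 _).feq.symm'
      _ =f (and (or a b) (not a)) := feq_and_left _ h1.symm'
      _ =f (and (not a) (or a b)) := feq_and_comm _ _
      _ =f (or (and (not a) a) (and (not a) b)) := (Step.bt14 _ _ _).feq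
      _ =f (or zero (and (not a) b)) :=
          feq_or_left _ ((feq_and_comm _ _).trans' (Step.bt5 _).feq)
      _ =f (and (not a) b) := (Step.bt2 _).feq
      _ =f (and b (not a)) := feq_and_comm _ _
  have key2 : FEq b (and b (not a)) :=
    calc b =f (and one b) := (Step.bt3 _).feq.symm'
      _ =f (and (or a (not a)) b) := feq_and_left _ (Step.bt6 _).feq.symm'
      _ =f (and b (or a (not a))) := feq_and_comm _ _
      _ =f (or (and b a) (and b (not a))) := (Step.bt14 _ _ _).feq
      _ =f (or zero (and b (not a))) :=
          feq_or_left _ ((feq_and_comm _ _).trans' h2)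
      _ =f (and b (not a)) := (Step.bt2 _).feq
  exact key1.trans' key2.symm'

/-! ### Main existence of a DNF form -/

theorem exists_dnfT_feq {V : Finset ℕ} : ∀ (t : BT), vars t ⊆ V →
    ∃ F : Finset (Finset ℕ), F ⊆ V.powerset ∧ FEq t (dnfT V F) := by
  intro t
  induction t with
  | X i =>
      intro hv
      refine ⟨V.powerset.filter (fun S => i ∉ S), Finset.filter_subset _ _, ?_⟩
      exact X_feq_dnfT (hv (by simp [vars]))
  | zero =>
      intro _
      refine ⟨∅, Finset.empty_subset _, ?_⟩
      have h : dnfT V ∅ = zero := by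
        simp only [dnfT, Finset.toList_empty, List.map_nil]; rfl
      rw [h]; exact feq_refl _
  | one =>
      intro _
      exact ⟨V.powerset, Finset.Subset.refl _, (dnfT_powerset V).symm'⟩
  | or t t' iht iht' =>
      intro hv
      obtain ⟨F, hF, he⟩ := iht (fun x hx => hv (by simp [vars]; exact Or.inl hx))
      obtain ⟨F', hF', he'⟩ := iht' (fun x hx => hv (by simp [vars]; exact Or.inr hx))
      exact ⟨F ∪ F', Finset.union_subset hF hF', (feq_or he he').trans' (dnfT_or V F F')⟩
  | and t t' iht iht' =>
      intro hv
      obtain ⟨F, hF, he⟩ := iht (fun x hx => hv (by simp [vars]; exact Or.inl hx))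
      obtain ⟨F', hF', he'⟩ := iht' (fun x hx => hv (by simp [vars]; exact Or.inr hx))
      refine ⟨F ∩ F', (Finset.inter_subset_left).trans hF, ?_⟩
      exact (feq_and he he').trans' (dnfT_and
        (fun S hS => Finset.mem_powerset.1 (hF hS))
        (fun S hS => Finset.mem_powerset.1 (hF' hS)))
  | not t iht =>
      intro hv
      obtain ⟨F, hF, he⟩ := iht (fun x hx => hv (by simpa [vars] using hx))
      refine ⟨V.powerset \ F, Finset.sdiff_subset, ?_⟩
      have h1 : FEq (or (dnfT V F) (dnfT V (V.powerset \ F))) one := by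
        have := dnfT_or V F (V.powerset \ F)
        rw [Finset.union_sdiff_of_subset hF] at this
        exact this.trans' (dnfT_powerset V)
      have h2 : FEq (and (dnfT V F) (dnfT V (V.powerset \ F))) zero := by
        have := dnfT_and (V := V) (F := F) (F' := V.powerset \ F)
          (fun S hS => Finset.mem_powerset.1 (hF hS))
          (fun S hS => Finset.mem_powerset.1 (Finset.sdiff_subset hS))
        rw [Finset.inter_sdiff_self] at this
        have hz : dnfT V (∅ : Finset (Finset ℕ)) = zero := by
          simp only [dnfT, Finset.toList_empty, List.map_nil]; rfl
        rwa [hz] at this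
      exact (feq_not he).trans' (feq_not_of h1 h2)

end BT
namespace BT

/-! ### The canonical DNF terms are standard DNF terms -/

theorem isMeetOfLits_meetL (τ : ℕ → Bool) :
    ∀ (l : List ℕ), l ≠ [] → l.Nodup → IsMeetOfLits τ l.toFinset (meetL (l.map (lit τ)))
  | [], h, _ => absurd rfl h
  | [i], _, _ => by simpa [meetL] using IsMeetOfLits.single (τ := τ) i
  | i :: j :: l, _, hnd => by
      have ihm := isMeetOfLits_meetL τ (j :: l) (by simp) (List.nodup_cons.1 hnd).2
      have hdisj : Disjoint ({i} : Finset ℕ) (j :: l).toFinset := by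
        rw [Finset.disjoint_singleton_left, List.mem_toFinset]
        exact (List.nodup_cons.1 hnd).1
      have h := IsMeetOfLits.and hdisj (IsMeetOfLits.single i) ihm
      rw [List.toFinset_cons, Finset.insert_eq]
      exact h

theorem isJoinOfPos_joinL : ∀ (l : List BT), l ≠ [] → IsJoinOfPos ↑l (joinL l)
  | [], h => absurd rfl h
  | [a], _ => IsJoinOfPos.single a
  | a :: b :: l, _ => by
      have ih := isJoinOfPos_joinL (b :: l) (by simp)
      have h := IsJoinOfPos.or (IsJoinOfPos.single a) ih
      rwa [Multiset.singleton_add, Multiset.cons_coe] at h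

theorem isDNF_dnfT {n : ℕ} (hn : 0 < n) {F : Finset (Finset ℕ)}
    (hF : F ⊆ (Finset.Icc 1 n).powerset) : IsDNF n (dnfT (Finset.Icc 1 n) F) := by
  set V := Finset.Icc 1 n with hV
  set L := F.toList with hL
  have hsub : ∀ j : Fin L.length, L.get j ⊆ V := by
    intro j
    exact Finset.mem_powerset.1 (hF (Finset.mem_toList.1 (L.get_mem _)))
  refine ⟨L.length, fun j l => decide (l ∈ L.get j), fun j => mon V (L.get j), ?_, ?_, ?_⟩
  · intro j
    right
    have hne : V.toList ≠ [] := by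
      rw [Ne, Finset.toList_eq_nil]
      exact (Finset.nonempty_Icc.2 hn).ne_empty
    have h := isMeetOfLits_meetL (fun l => decide (l ∈ L.get j)) V.toList hne V.nodup_toList
    rw [Finset.toList_toFinset] at h
    exact h
  · intro j j' hjj
    have hne : L.get j ≠ L.get j' := by
      intro h
      exact hjj (List.nodup_iff_injective_get.1 F.nodup_toList h)
    have hdiff : ∃ l ∈ V, ¬(l ∈ L.get j ↔ l ∈ L.get j') := by
      by_contra hcon
      push_neg at hcon
      exact hne (Finset.ext fun l => by
        by_cases hlv : l ∈ V
        · exact hcon l hlv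
        · constructor <;> intro h <;>
            [exact absurd (hsub j h) hlv; exact absurd (hsub j' h) hlv])
    obtain ⟨l, hlv, hd⟩ := hdiff
    exact ⟨l, hlv, fun h => hd (decide_eq_decide.1 h)⟩
  · have hms : Multiset.map (fun j => mon V (L.get j)) Finset.univ.val
        = ↑(L.map (mon V)) := by
      rw [Fin.univ_val_map, show (fun j => mon V (L.get j)) = (mon V ∘ L.get) from rfl,
        ← List.map_ofFn, List.ofFn_get]
    rw [hms]
    by_cases hFe : F = ∅
    · left
      subst hFe
      simp only [hL, Finset.toList_empty, List.map_nil]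
      exact ⟨rfl, by simp only [dnfT, Finset.toList_empty, List.map_nil]; rfl⟩
    · right
      have hLne : L.map (mon V) ≠ [] := by
        intro h
        rcases List.map_eq_nil_iff.1 h with h'
        exact hFe (Finset.toList_eq_nil.1 h')
      exact isJoinOfPos_joinL _ hLne

end BT

open BT in
/-- every Boolean term with variables among `X 1, …, X n` is
f-equivalent to an `n`-standard DNF term. -/
theorem exists_dnf_feq (n : ℕ) (hn : 0 < n) (t : BT)
    (hvars : vars t ⊆ Finset.Icc 1 n) :
    ∃ u : BT, IsDNF n u ∧ FEq t u := by
  obtain ⟨F, hF, he⟩ := exists_dnfT_feq t hvars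
  exact ⟨dnfT (Finset.Icc 1 n) F, isDNF_dnfT hn hF, he⟩
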